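/- For −1 < ρ₁ < 0 ≤ ρ₂ < 1, the EWC density with μ₁ = μ₂ = μ can be written as a two-component mixture of wrapped Cauchy densities: f(θ) = p·wc(θ; μ, ρ₁) + (1−p)·wc(θ; μ, ρ₂), where p = −ρ₁(1−ρ₂²)/((1+ρ₁ρ₂)(ρ₂−ρ₁)) and wc(θ; μ, ρ) = (1/2π)(1−ρ²)/(1+ρ²−2ρcos(θ−μ)). Moreover 0 ≤ p ≤ 1. -/

import Mathlib

open Real

/-- The wrapped Cauchy density `WC(μ, ρ)`. -/
noncomputable def wc (θ μ ρ : ℝ) : ℝ :=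
  (1 / (2 * Real.pi)) * (1 - ρ ^ 2) / (1 + ρ ^ 2 - 2 * ρ * Real.cos (θ - μ))

/-- For `-1 < ρ₁ < 0 ≤ ρ₂ < 1`, the symmetric EWC density with `μ₁ = μ₂ = μ` is a
two-component mixture of wrapped Cauchy densities with mixing weight
`p = -ρ₁(1-ρ₂²)/((1+ρ₁ρ₂)(ρ₂-ρ₁)) ∈ [0,1]`. -/
theorem ewc_symmetric_mixture (ρ₁ ρ₂ μ : ℝ)
    (hρ₁ : -1 < ρ₁) (hρ₁0 : ρ₁ < 0) (hρ₂0 : 0 ≤ ρ₂) (hρ₂ : ρ₂ < 1)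
    (hμ : μ ∈ Set.Ico (-Real.pi) Real.pi) :
    (∀ θ : ℝ,
      (1 - ρ₁ * ρ₂) / (2 * Real.pi * (1 + ρ₁ * ρ₂)) *
          ((1 - ρ₁ ^ 2) / (1 + ρ₁ ^ 2 - 2 * ρ₁ * Real.cos (θ - μ))) *
          ((1 - ρ₂ ^ 2) / (1 + ρ₂ ^ 2 - 2 * ρ₂ * Real.cos (θ - μ)))
        = (-ρ₁ * (1 - ρ₂ ^ 2) / ((1 + ρ₁ * ρ₂) * (ρ₂ - ρ₁))) * wc θ μ ρ₁ +
          (1 - -ρ₁ * (1 - ρ₂ ^ 2) / ((1 + ρ₁ * ρ₂) * (ρ₂ - ρ₁))) * wc θ μ ρ₂) ∧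
    0 ≤ -ρ₁ * (1 - ρ₂ ^ 2) / ((1 + ρ₁ * ρ₂) * (ρ₂ - ρ₁)) ∧
    -ρ₁ * (1 - ρ₂ ^ 2) / ((1 + ρ₁ * ρ₂) * (ρ₂ - ρ₁)) ≤ 1 := by

  have hπ : (0:ℝ) < Real.pi := Real.pi_pos
  have h12 : -1 < ρ₁ * ρ₂ := by nlinarith
  have hs : 0 < 1 + ρ₁ * ρ₂ := by linarith
  have hd : 0 < ρ₂ - ρ₁ := by linarith
  refine ⟨fun θ => ?_, ?_, ?_⟩
  · have hc := Real.neg_one_le_cos (θ - μ)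
    have hc' := Real.cos_le_one (θ - μ)
    have hD1 : (0:ℝ) < 1 + ρ₁ ^ 2 - 2 * ρ₁ * Real.cos (θ - μ) := by nlinarith
    have hD2 : (0:ℝ) < 1 + ρ₂ ^ 2 - 2 * ρ₂ * Real.cos (θ - μ) := by nlinarith
    unfold wc
    field_simp
    have hE1 : 1 + ρ₁ ^ 2 - ρ₁ * 2 * Real.cos (θ - μ) ≠ 0 := ne_of_gt (by linarith)
    have hE2 : 1 + ρ₂ ^ 2 - ρ₂ * 2 * Real.cos (θ - μ) ≠ 0 := ne_of_gt (by linarith)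
    field_simp
    ring
  · apply div_nonneg (by nlinarith [sq_nonneg ρ₂, mul_pos (neg_pos.mpr hρ₁0) (by nlinarith : (0:ℝ) < 1 - ρ₂ ^ 2)]) (by positivity)
  · rw [div_le_one (by positivity)]
    nlinarith [mul_nonneg hρ₂0 (by nlinarith : (0:ℝ) ≤ 1 - ρ₁ ^ 2)]
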